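/- Let h ∈ L¹[0,1] be nonnegative, s ∈ (0,1], and F : [0,∞) → [0,∞) be (h-s)₂-convex and integrable on [a,b] ⊆ [0,∞) with a < b. Then (1/(b-a))·∫ₐᵇ F(x) dx ≤ K·(F(a) + F(b)), where K = ∫₀¹ h(t)^s dt. -/

import Mathlib

open Set intervalIntegral

theorem hadamard_right_hs2 (h : ℝ → ℝ) (s : ℝ) (F : ℝ → ℝ) (a b : ℝ)
    (hh_nonneg : ∀ t, 0 ≤ h t) (hh_ne : ∃ t, h t ≠ 0) (hs : s ∈ Ioc (0:ℝ) 1)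
    (hh_int : IntervalIntegrable (fun t => h t ^ s) MeasureTheory.volume 0 1)
    (hF_nonneg : ∀ x, 0 ≤ x → 0 ≤ F x)
    (hF : ∀ u v t, 0 ≤ u → 0 ≤ v → t ∈ Icc (0:ℝ) 1 →
      F (t * u + (1 - t) * v) ≤ h t ^ s * F u + h (1 - t) ^ s * F v)
    (ha : 0 ≤ a) (hab : a < b)
    (hF_int : IntervalIntegrable F MeasureTheory.volume a b) :
    (1 / (b - a)) * ∫ x in a..b, F x ≤
      (∫ t in (0:ℝ)..1, h t ^ s) * (F a + F b) := by
  have hba : (0:ℝ) < b - a := sub_pos.mpr hab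
  have hb : 0 ≤ b := ha.trans hab.le
  have hG_int : IntervalIntegrable (fun t => F ((b - a) * t + a))
      MeasureTheory.volume 0 1 := by
    have := (hF_int.comp_add_right a).comp_mul_left (c := b - a)
    simpa [sub_self, div_self hba.ne'] using this
  have h2_int : IntervalIntegrable (fun t => h (1 - t) ^ s)
      MeasureTheory.volume 0 1 := by
    have := (hh_int.comp_sub_left 1).symm
    simpa using this
  have hbound : IntervalIntegrable
      (fun t => h t ^ s * F b + h (1 - t) ^ s * F a) MeasureTheory.volume 0 1 :=
    (hh_int.mul_const _).add (h2_int.mul_const _)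
  have hmono : (∫ t in (0:ℝ)..1, F ((b - a) * t + a)) ≤
      ∫ t in (0:ℝ)..1, (h t ^ s * F b + h (1 - t) ^ s * F a) := by
    apply intervalIntegral.integral_mono_on zero_le_one hG_int hbound
    intro t ht
    have heq : (b - a) * t + a = t * b + (1 - t) * a := by ring
    rw [heq]
    exact hF b a t hb ha ht
  have hsub : (∫ t in (0:ℝ)..1, F ((b - a) * t + a)) =
      (b - a)⁻¹ * ∫ x in a..b, F x := by
    have := intervalIntegral.integral_comp_mul_add (a := 0) (b := 1) F hba.ne' a
    simpa [smul_eq_mul] using this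
  have hrefl : (∫ t in (0:ℝ)..1, h (1 - t) ^ s) = ∫ t in (0:ℝ)..1, h t ^ s := by
    have := intervalIntegral.integral_comp_sub_left (a := 0) (b := 1) (fun t => h t ^ s) 1
    simpa using this
  have hsplit : (∫ t in (0:ℝ)..1, (h t ^ s * F b + h (1 - t) ^ s * F a)) =
      (∫ t in (0:ℝ)..1, h t ^ s) * (F a + F b) := by
    rw [intervalIntegral.integral_add (hh_int.mul_const _) (h2_int.mul_const _),
      intervalIntegral.integral_mul_const, intervalIntegral.integral_mul_const,
      hrefl]
    ring
  rw [one_div, ← hsub, ← hsplit]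
  exact hmono
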